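/- arXiv:1207.7208 — 2 statements merged into one kernel-verified Lean document; each statement's English description precedes it below -/
import Mathlib

section
/- Let β > 0, K > 0 and let μ be a probability measure on (0,∞) with finite moment m := ∫ s^{2/β} μ(ds) < ∞. Then for every t ≥ 0, the integral over the plane ∫_{ℝ²} μ({s ∈ (0,∞) : (K|x|)^β / s < t}) dx equals (π m / K²) · t^{2/β}. (This identity gives the intensity measure Λ([0,t)) = λ π E[S^{2/β}] K^{-2} t^{2/β} of the point process of propagation losses {l(X_i)/S_i} seen by a user at the origin in a homogeneous Poisson network of intensity λ, and shows it depends on the shadowing distribution only through the moment E[S^{2/β}].) -/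
open MeasureTheory Real

theorem stmt_0 (β K : ℝ) (hβ : 0 < β) (hK : 0 < K)
    (μ : Measure ℝ) [IsProbabilityMeasure μ] (hμ : μ (Set.Ioi (0:ℝ))ᶜ = 0)
    (m : ℝ) (hint : Integrable (fun s => s ^ (2/β)) μ)
    (hm : m = ∫ s, s ^ (2/β) ∂μ) :
    ∀ t : ℝ, 0 ≤ t →
      (∫ x : EuclideanSpace ℝ (Fin 2),
        (μ {s : ℝ | 0 < s ∧ (K * ‖x‖) ^ β / s < t}).toReal)
      = (π * m / K ^ 2) * t ^ (2/β) := by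
  intro t ht
  have hμpos : ∀ᵐ s ∂μ, 0 < s := by
    rw [ae_iff]
    have : {s : ℝ | ¬ 0 < s} = (Set.Ioi (0:ℝ))ᶜ := by ext s; simp
    rw [this]; exact hμ
  have hm0 : 0 ≤ m := by
    rw [hm]
    exact integral_nonneg_of_ae (hμpos.mono fun s hs => Real.rpow_nonneg hs.le _)
  rcases eq_or_lt_of_le ht with rfl | ht
  · -- t = 0
    have hempty : ∀ x : EuclideanSpace ℝ (Fin 2),
        {s : ℝ | 0 < s ∧ (K * ‖x‖) ^ β / s < (0:ℝ)} = ∅ := by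
      intro x
      ext s
      simp only [Set.mem_setOf_eq, Set.mem_empty_iff_false, iff_false, not_and]
      intro hs hlt
      have h1 : 0 ≤ (K * ‖x‖) ^ β := Real.rpow_nonneg (by positivity) _
      have : 0 ≤ (K * ‖x‖) ^ β / s := div_nonneg h1 hs.le
      linarith
    simp only [hempty, measure_empty, ENNReal.toReal_zero, integral_zero]
    rw [Real.zero_rpow (by positivity), mul_zero]
  · -- t > 0
    set c : EuclideanSpace ℝ (Fin 2) → ℝ := fun x => (K * ‖x‖) ^ β / t with hc
    have hcnn : ∀ x, 0 ≤ c x := fun x =>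
      div_nonneg (Real.rpow_nonneg (by positivity) _) ht.le
    have hseteq : ∀ x : EuclideanSpace ℝ (Fin 2),
        {s : ℝ | 0 < s ∧ (K * ‖x‖) ^ β / s < t} = Set.Ioi (c x) := by
      intro x
      ext s
      simp only [Set.mem_setOf_eq, Set.mem_Ioi, hc]
      constructor
      · rintro ⟨hs, hlt⟩
        rw [div_lt_iff₀ ht, mul_comm s t]
        rwa [div_lt_iff₀ hs] at hlt
      · intro hlt
        have hs : 0 < s := lt_of_le_of_lt (hcnn x) hlt
        refine ⟨hs, ?_⟩
        rw [div_lt_iff₀ hs, mul_comm t s]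
        rwa [div_lt_iff₀ ht] at hlt
    simp only [hseteq]
    have hcm : Measurable c :=
      (((continuous_const.mul continuous_norm).rpow_const fun x => Or.inr hβ.le).div_const t).measurable
    -- the doubly-indexed indicator function
    set F : EuclideanSpace ℝ (Fin 2) → ℝ → ENNReal :=
      fun x s => {p : (EuclideanSpace ℝ (Fin 2)) × ℝ | c p.1 < p.2}.indicator 1 (x, s) with hF
    have hFset : MeasurableSet {p : (EuclideanSpace ℝ (Fin 2)) × ℝ | c p.1 < p.2} :=
      measurableSet_lt (hcm.comp measurable_fst) measurable_snd
    have hFmeas : Measurable (Function.uncurry F) := by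
      have : Function.uncurry F
          = Set.indicator {p : (EuclideanSpace ℝ (Fin 2)) × ℝ | c p.1 < p.2} 1 := rfl
      rw [this]
      exact (measurable_indicator_const_iff 1).mpr hFset
    have hbase : ∀ x : EuclideanSpace ℝ (Fin 2),
        μ (Set.Ioi (c x)) = ∫⁻ s, F x s ∂μ := by
      intro x
      rw [← lintegral_indicator_one measurableSet_Ioi]
      apply lintegral_congr
      intro s
      by_cases h : c x < s <;> simp [hF, Set.indicator, h]
    have hmeas : Measurable (fun x => μ (Set.Ioi (c x))) := by
      simp only [hbase]
      exact Measurable.lintegral_prod_right hFmeas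
    have hfin : ∀ᵐ x : EuclideanSpace ℝ (Fin 2), μ (Set.Ioi (c x)) < ⊤ :=
      Filter.Eventually.of_forall fun x => lt_of_le_of_lt prob_le_one ENNReal.one_lt_top
    rw [integral_toReal hmeas.aemeasurable hfin]
    -- compute the lintegral via Tonelli
    have key : ∫⁻ x : EuclideanSpace ℝ (Fin 2), μ (Set.Ioi (c x))
        = ENNReal.ofReal (π * t ^ (2/β) / K ^ 2) * ENNReal.ofReal m := by
      simp only [hbase]
      rw [lintegral_lintegral_swap hFmeas.aemeasurable]
      have h2 : ∀ s : ℝ, (∫⁻ x : EuclideanSpace ℝ (Fin 2), F x s)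
          = volume {x : EuclideanSpace ℝ (Fin 2) | c x < s} := by
        intro s
        have hpre : {x : EuclideanSpace ℝ (Fin 2) | c x < s} = c ⁻¹' Set.Iio s := rfl
        rw [hpre, ← lintegral_indicator_one (hcm measurableSet_Iio)]
        apply lintegral_congr
        intro x
        by_cases h : c x < s <;> simp [hF, Set.indicator, h]
      simp_rw [h2]
      -- now compute ∫⁻ s, volume {x | c x < s} ∂μ
      have h3 : ∀ᵐ s ∂μ, volume {x : EuclideanSpace ℝ (Fin 2) | c x < s}
          = ENNReal.ofReal (π * t ^ (2/β) / K ^ 2) * ENNReal.ofReal (s ^ (2/β)) := by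
        filter_upwards [hμpos] with s hs
        have hts : 0 < t * s := mul_pos ht hs
        have hball : {x : EuclideanSpace ℝ (Fin 2) | c x < s}
            = Metric.ball (0 : EuclideanSpace ℝ (Fin 2)) ((t * s) ^ (1/β) / K) := by
          ext x
          simp only [Set.mem_setOf_eq, Metric.mem_ball, dist_zero_right, hc]
          rw [div_lt_iff₀ ht, lt_div_iff₀ hK, mul_comm ‖x‖ K, one_div,
            Real.lt_rpow_inv_iff_of_pos (by positivity) hts.le hβ, mul_comm t s]
        rw [hball, EuclideanSpace.volume_ball]
        have hcard : (Fintype.card (Fin 2)) = 2 := by simp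
        rw [hcard]
        have hΓ : Real.Gamma ((2:ℕ) / 2 + 1) = 1 := by
          norm_num [Real.Gamma_two]
        have hsq : Real.sqrt π ^ (2:ℕ) = π := Real.sq_sqrt pi_pos.le
        rw [hΓ, hsq]
        have hr : (0:ℝ) ≤ (t * s) ^ (1/β) / K := by positivity
        rw [← ENNReal.ofReal_pow hr, ← ENNReal.ofReal_mul (by positivity),
          ← ENNReal.ofReal_mul (by positivity)]
        congr 1
        have h2β : ((t * s) ^ (1/β)) ^ (2:ℕ) = t ^ (2/β) * s ^ (2/β) := by
          rw [← Real.rpow_natCast ((t*s)^(1/β)) 2, ← Real.rpow_mul hts.le,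
            ← Real.mul_rpow ht.le hs.le]
          norm_num
          ring_nf
        rw [div_pow, h2β]
        field_simp
      rw [lintegral_congr_ae h3, lintegral_const_mul' _ _ ENNReal.ofReal_ne_top]
      congr 1
      rw [hm, ← ofReal_integral_eq_lintegral_ofReal hint
        (hμpos.mono fun s hs => Real.rpow_nonneg hs.le _)]
    rw [key, ← ENNReal.ofReal_mul (by positivity), ENNReal.toReal_ofReal (by positivity)]
    ring
end

section
/- Let β > 0, K > 0, n > 0 and s ∈ ℝ. Then the integral over the plane of the Gaussian-CDF kernel equals exactly ∫_{ℝ²} G( (s − β·log(K|x|) − n/β)/√n ) dx = 2π ∫_0^∞ r · G( (s − β·log(Kr) − n/β)/√n ) dr = (π/K²) · e^{2s/β}, independently of n. -/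
open MeasureTheory Real

private lemma mgf_integrable' (c : ℝ) :
    Integrable (fun u : ℝ => Real.exp (-u^2/2 - c*u)) := by
  have h : ∀ u : ℝ, -u^2/2 - c*u = c^2/2 + (-(1/2) * (u + c)^2) := by intro u; ring
  simp_rw [h, Real.exp_add]
  exact ((integrable_exp_neg_mul_sq (by norm_num : (0:ℝ) < 1/2)).comp_add_right c).const_mul _

private lemma mgf_integral' (c : ℝ) :
    ∫ u : ℝ, Real.exp (-u^2/2 - c*u) = Real.sqrt (2*π) * Real.exp (c^2/2) := by
  have h : ∀ u : ℝ, -u^2/2 - c*u = c^2/2 + (-(1/2) * (u + c)^2) := by intro u; ring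
  simp_rw [h, Real.exp_add, integral_const_mul]
  rw [integral_add_right_eq_self (fun u => Real.exp (-(1/2) * u^2)) c, integral_gaussian]
  rw [show π / (1/2) = 2 * π by ring, mul_comm]

/-- The standard normal cumulative distribution function
`G(t) = ∫_{-∞}^t e^{-u²/2} du / √(2π)`. -/
noncomputable def stdNormalCDF (t : ℝ) : ℝ :=
  ∫ u in Set.Iic t, Real.exp (-u ^ 2 / 2) / Real.sqrt (2 * Real.pi)

private lemma radial_integral' (β K n s : ℝ) (hβ : 0 < β) (hK : 0 < K) (hn : 0 < n) :
    ∫ r in Set.Ioi (0:ℝ), r * stdNormalCDF ((s - β * Real.log (K * r) - n / β) / Real.sqrt n)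
      = Real.exp (2 * s / β) / (2 * K ^ 2) := by
  have hc : (0:ℝ) < Real.sqrt n := Real.sqrt_pos.mpr hn
  have h2π : Real.sqrt (2*π) ≠ 0 := ne_of_gt (Real.sqrt_pos.mpr (by positivity))
  set φ : ℝ → ℝ := fun u => Real.exp (-u^2/2) / Real.sqrt (2*π) with hφ
  have hφ0 : ∀ u, 0 ≤ φ u := fun u => div_nonneg (Real.exp_nonneg _) (Real.sqrt_nonneg _)
  have hφc : Continuous φ := by fun_prop
  set S : Set (ℝ × ℝ) := {p | p.2 * Real.sqrt n ≤ s - β * Real.log (K * p.1) - n / β} with hSdef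
  have hS : MeasurableSet S := by
    apply measurableSet_le
    · exact (measurable_snd.mul_const _)
    · exact (measurable_const.sub (((Real.measurable_log.comp
        (measurable_fst.const_mul K)).const_mul β))).sub measurable_const
  set F : ℝ × ℝ → ℝ := S.indicator (fun q => |q.1| * φ q.2) with hFdef
  have hF0 : ∀ p, 0 ≤ F p := fun p =>
    Set.indicator_nonneg (fun q _ => mul_nonneg (abs_nonneg _) (hφ0 _)) p
  have hFm : Measurable F :=
    ((measurable_fst.abs).mul (hφc.measurable.comp measurable_snd)).indicator hS
  set R : ℝ → ℝ := fun u => Real.exp ((s - n/β - u * Real.sqrt n)/β) / K with hRdef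
  have hR : ∀ u, 0 < R u := fun u => div_pos (Real.exp_pos _) hK
  -- step 1: inner integral over u
  have h1 : ∀ r : ℝ, 0 < r → (∫ u, F (r, u))
      = r * stdNormalCDF ((s - β * Real.log (K * r) - n / β) / Real.sqrt n) := by
    intro r hr
    have he : ∀ u : ℝ, F (r, u)
        = r * (Set.Iic ((s - β * Real.log (K * r) - n / β) / Real.sqrt n)).indicator φ u := by
      intro u
      have hmem : (r, u) ∈ S ↔ u ∈ Set.Iic ((s - β * Real.log (K * r) - n / β) / Real.sqrt n) := by
        simp only [hSdef, Set.mem_setOf_eq, Set.mem_Iic, le_div_iff₀ hc]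
      by_cases h : (r, u) ∈ S
      · rw [hFdef, Set.indicator_of_mem h, Set.indicator_of_mem (hmem.mp h), abs_of_pos hr]
      · rw [hFdef, Set.indicator_of_notMem h,
          Set.indicator_of_notMem (fun hx => h (hmem.mpr hx)), mul_zero]
    simp_rw [he, integral_const_mul, integral_indicator measurableSet_Iic]
    rfl
  -- pointwise form in r
  have hee : ∀ u : ℝ, ∀ r ∈ Set.Ioi (0:ℝ), F (r, u)
      = (Set.Ioc (0:ℝ) (R u)).indicator (fun r => r * φ u) r := by
    intro u r hr
    have hr' : (0:ℝ) < r := hr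
    have hKr : (0:ℝ) < K * r := mul_pos hK hr'
    have hmem : (r, u) ∈ S ↔ r ≤ R u := by
      rw [hSdef, Set.mem_setOf_eq, hRdef]
      rw [le_div_iff₀ hK, ← Real.log_le_iff_le_exp (by positivity), le_div_iff₀ hβ,
        mul_comm r K]
      constructor <;> intro h <;> nlinarith [h]
    by_cases h : (r, u) ∈ S
    · rw [hFdef, Set.indicator_of_mem h,
        Set.indicator_of_mem (Set.mem_Ioc.mpr ⟨hr', hmem.mp h⟩), abs_of_pos hr']
    · rw [hFdef, Set.indicator_of_notMem h, Set.indicator_of_notMem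
        (fun hx => h (hmem.mpr (Set.mem_Ioc.mp hx).2))]
  -- step 2: inner integral over r
  have h2 : ∀ u : ℝ, (∫ r in Set.Ioi (0:ℝ), F (r, u)) = φ u * (R u)^2 / 2 := by
    intro u
    rw [setIntegral_congr_fun measurableSet_Ioi (hee u), setIntegral_indicator measurableSet_Ioc,
      Set.inter_eq_right.mpr Set.Ioc_subset_Ioi_self]
    rw [show (∫ r in Set.Ioc (0:ℝ) (R u), r * φ u) = (∫ r in Set.Ioc (0:ℝ) (R u), r) * φ u from
      integral_mul_const _ _, ← intervalIntegral.integral_of_le (hR u).le, integral_id]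
    ring
  -- step 3: the u-marginal as an MGF
  have h3 : ∀ u : ℝ, φ u * (R u)^2 / 2
      = (Real.exp (2*(s - n/β)/β) / (2 * K^2 * Real.sqrt (2*π)))
          * Real.exp (-u^2/2 - (2 * Real.sqrt n / β) * u) := by
    intro u
    have e1 : (R u)^2 = Real.exp (2*(s - n/β)/β) * Real.exp (-(2 * Real.sqrt n / β) * u) / K^2 := by
      rw [hRdef, div_pow, sq (Real.exp _), ← Real.exp_add, ← Real.exp_add]
      congr 1
      field_simp
      ring
    have e2 : Real.exp (-u^2/2 - (2 * Real.sqrt n / β) * u)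
        = Real.exp (-u^2/2) * Real.exp (-(2 * Real.sqrt n / β) * u) := by
      rw [← Real.exp_add]; ring_nf
    rw [hφ, e1, e2]
    field_simp
  -- integrability on the product
  have hint : Integrable F ((volume.restrict (Set.Ioi (0:ℝ))).prod volume) := by
    rw [integrable_prod_iff' hFm.aestronglyMeasurable]
    constructor
    · refine Filter.Eventually.of_forall fun u => ?_
      have hi : IntegrableOn (fun r => r * φ u) (Set.Ioc (0:ℝ) (R u)) volume :=
        (continuous_id.mul continuous_const).integrableOn_Ioc
      exact ((hi.integrable_indicator measurableSet_Ioc).restrict).congr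
        (by filter_upwards [ae_restrict_mem measurableSet_Ioi] with r hr
            exact (hee u r hr).symm)
    · have hnorm : (fun u => ∫ r in Set.Ioi (0:ℝ), ‖F (r, u)‖)
          = fun u => φ u * (R u)^2 / 2 := by
        funext u
        rw [← h2 u]
        exact setIntegral_congr_fun measurableSet_Ioi fun r _ => Real.norm_of_nonneg (hF0 _)
      rw [hnorm]
      simp_rw [h3]
      exact (mgf_integrable' _).const_mul _
  -- put it together
  calc ∫ r in Set.Ioi (0:ℝ),
        r * stdNormalCDF ((s - β * Real.log (K * r) - n / β) / Real.sqrt n)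
      = ∫ r in Set.Ioi (0:ℝ), ∫ u, F (r, u) :=
        (setIntegral_congr_fun measurableSet_Ioi fun r hr => (h1 r hr).symm)
    _ = ∫ u, ∫ r in Set.Ioi (0:ℝ), F (r, u) := integral_integral_swap hint
    _ = ∫ u, (Real.exp (2*(s - n/β)/β) / (2 * K^2 * Real.sqrt (2*π)))
          * Real.exp (-u^2/2 - (2 * Real.sqrt n / β) * u) := by simp_rw [h2, h3]
    _ = Real.exp (2 * s / β) / (2 * K ^ 2) := by
        rw [integral_const_mul, mgf_integral']
        rw [show (2 * Real.sqrt n / β)^2/2 = 2*n/β^2 by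
          rw [div_pow, mul_pow, sq_sqrt hn.le]; ring]
        rw [show Real.exp (2*(s - n/β)/β) / (2 * K^2 * Real.sqrt (2*π))
            * (Real.sqrt (2*π) * Real.exp (2*n/β^2))
            = (Real.exp (2*(s - n/β)/β) * Real.exp (2*n/β^2)) / (2*K^2) from by
          field_simp]
        rw [← Real.exp_add, show 2*(s - n/β)/β + 2*n/β^2 = 2*s/β from by field_simp; ring]

theorem stmt_2 (β K n s : ℝ) (hβ : 0 < β) (hK : 0 < K) (hn : 0 < n) :
    (∫ x : EuclideanSpace ℝ (Fin 2),
        stdNormalCDF ((s - β * Real.log (K * ‖x‖) - n / β) / Real.sqrt n))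
      = 2 * π * ∫ r in Set.Ioi (0:ℝ),
          r * stdNormalCDF ((s - β * Real.log (K * r) - n / β) / Real.sqrt n)
    ∧ (∫ x : EuclideanSpace ℝ (Fin 2),
        stdNormalCDF ((s - β * Real.log (K * ‖x‖) - n / β) / Real.sqrt n))
      = (π / K ^ 2) * Real.exp (2 * s / β) := by
  have hpolar : (∫ x : EuclideanSpace ℝ (Fin 2),
        stdNormalCDF ((s - β * Real.log (K * ‖x‖) - n / β) / Real.sqrt n))
      = 2 * π * ∫ r in Set.Ioi (0:ℝ),
          r * stdNormalCDF ((s - β * Real.log (K * r) - n / β) / Real.sqrt n) := by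
    have := MeasureTheory.integral_fun_norm_addHaar (volume : Measure (EuclideanSpace ℝ (Fin 2)))
      (fun y => stdNormalCDF ((s - β * Real.log (K * y) - n / β) / Real.sqrt n))
    rw [this]
    have hdim : Module.finrank ℝ (EuclideanSpace ℝ (Fin 2)) = 2 := finrank_euclideanSpace_fin
    rw [hdim]
    have hball : (volume (Metric.ball (0 : EuclideanSpace ℝ (Fin 2)) 1)).toReal = π := by
      rw [EuclideanSpace.volume_ball]
      norm_num [Real.Gamma_two, Real.sq_sqrt Real.pi_pos.le]
      exact Real.pi_pos.le
    rw [measureReal_def, hball]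
    norm_num
    ring
  refine ⟨hpolar, ?_⟩
  rw [hpolar, radial_integral' β K n s hβ hK hn]
  field_simp
end
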